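/- For every n ≥ 2 and all nonnegative integers k_1,…,k_n: ζ_FKMT(−k_1,…,−k_n) = Σ_{i_2+j_2=k_2} ⋯ Σ_{i_n+j_n=k_n} [∏_{a=2}^n C(k_a,i_a)] · ζ_FKMT(−i_2,…,−i_n) · ζ_FKMT(−(k_1+j_2+⋯+j_n)), where C(k,i) denotes the binomial coefficient k!/(i!(k−i)!). -/

import Mathlib

/-- Desingularized multiple zeta value `ζ_FKMT(−k_1,…,−k_n)`. -/
noncomputable def zetaFKMT {n : ℕ} (k : Fin n → ℕ) : ℚ :=
  (-1 : ℚ) ^ (∑ i, k i) *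
    ∑ᶠ ν ∈ {ν : Fin n → Fin n → ℕ |
        (∀ i j : Fin n, j < i → ν i j = 0) ∧ ∀ j : Fin n, (∑ i, ν i j) = k j},
      ∏ i : Fin n,
        (((k i).factorial : ℚ) / ∏ j : Fin n, ((ν i j).factorial : ℚ)) *
          bernoulli ((∑ j, ν i j) + 1)

def triCol {n : ℕ} (k : Fin n → ℕ) : Finset (Fin n → Fin n → ℕ) :=
  (Fintype.piFinset fun _ => Fintype.piFinset fun j => Finset.range (k j + 1)).filter
    fun ν => (∀ i j : Fin n, j < i → ν i j = 0) ∧ ∀ j : Fin n, (∑ i, ν i j) = k j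

lemma mem_triCol {n : ℕ} {k : Fin n → ℕ} {ν : Fin n → Fin n → ℕ} :
    ν ∈ triCol k ↔ (∀ i j : Fin n, j < i → ν i j = 0) ∧ ∀ j : Fin n, (∑ i, ν i j) = k j := by
  constructor
  · intro h; exact (Finset.mem_filter.1 h).2
  · intro h
    refine Finset.mem_filter.2 ⟨?_, h⟩
    refine Fintype.mem_piFinset.2 fun i => Fintype.mem_piFinset.2 fun j => ?_
    rw [Finset.mem_range, Nat.lt_succ_iff, ← h.2 j]
    exact Finset.single_le_sum (f := fun a => ν a j) (fun _ _ => Nat.zero_le _) (Finset.mem_univ i)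

lemma zetaFKMT_eq_sum {n : ℕ} (k : Fin n → ℕ) :
    zetaFKMT k = (-1 : ℚ) ^ (∑ i, k i) *
      ∑ ν ∈ triCol k, ∏ i : Fin n,
        (((k i).factorial : ℚ) / ∏ j : Fin n, ((ν i j).factorial : ℚ)) *
          bernoulli ((∑ j, ν i j) + 1) := by
  unfold zetaFKMT
  congr 1
  rw [← finsum_mem_coe_finset]
  congr 1
  ext ν
  simp [mem_triCol]

lemma zetaFKMT_single (K : ℕ) :
    zetaFKMT (fun _ : Fin 1 => K) = (-1 : ℚ) ^ K * bernoulli (K + 1) := by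
  unfold zetaFKMT
  have hset : {ν : Fin 1 → Fin 1 → ℕ |
      (∀ i j : Fin 1, j < i → ν i j = 0) ∧ ∀ j : Fin 1, (∑ i, ν i j) = K} =
      {fun _ _ => K} := by
    ext ν
    simp only [Set.mem_setOf_eq, Set.mem_singleton_iff]
    constructor
    · rintro ⟨-, h2⟩
      funext a b
      have := h2 b
      simpa [Fin.sum_univ_one, Subsingleton.elim a (0 : Fin 1)] using this
    · rintro rfl
      refine ⟨fun i j h => absurd h (by omega), fun j => by simp⟩
  rw [hset, finsum_mem_singleton]
  simp [Fin.sum_univ_one, Nat.factorial_ne_zero, div_self]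

lemma triCol_facts {m : ℕ} {k : Fin (m+2) → ℕ} {ν : Fin (m+2) → Fin (m+2) → ℕ}
    (hν : ν ∈ triCol k) :
    ν 0 0 = k 0 ∧ (∀ a : Fin (m+1), ν a.succ 0 = 0) ∧
      (∀ b : Fin (m+1), ν 0 b.succ + ∑ a : Fin (m+1), ν a.succ b.succ = k b.succ) := by
  obtain ⟨htri, hcol⟩ := mem_triCol.1 hν
  have ha0 : ∀ a : Fin (m+1), ν a.succ 0 = 0 := fun a => htri a.succ 0 (Fin.succ_pos a)
  refine ⟨?_, ha0, ?_⟩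
  · have := hcol 0
    rw [Fin.sum_univ_succ] at this
    simpa [ha0] using this
  · intro b
    have := hcol b.succ
    rwa [Fin.sum_univ_succ] at this

/-- For every `n = m + 2 ≥ 2` and all `k_1,…,k_n ∈ ℕ`:
`ζ_FKMT(−k_1,…,−k_n) = Σ_{i_2+j_2=k_2} ⋯ Σ_{i_n+j_n=k_n} ∏_a C(k_a,i_a) ·
ζ_FKMT(−i_2,…,−i_n) · ζ_FKMT(−(k_1+j_2+⋯+j_n))`.
The tuple `(i_2,…,i_n)` is encoded as `i : Fin (m+1) → ℕ` with `i a ≤ k_{a+1}`,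
and `j_a = k_a − i_a`. -/
theorem zetaFKMT_recurrence (m : ℕ) (k : Fin (m + 2) → ℕ) :
    zetaFKMT k =
      ∑ i ∈ Fintype.piFinset (fun a : Fin (m + 1) => Finset.range (k a.succ + 1)),
        (∏ a : Fin (m + 1), ((k a.succ).choose (i a) : ℚ)) *
          zetaFKMT (fun a : Fin (m + 1) => i a) *
          zetaFKMT (fun _ : Fin 1 => k 0 + ∑ a : Fin (m + 1), (k a.succ - i a)) := by
  classical
  simp only [zetaFKMT_single]
  simp only [zetaFKMT_eq_sum]
  rw [Finset.mul_sum]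
  have hstep : ∀ (A B C D : ℚ) (s : Finset (Fin (m+1) → Fin (m+1) → ℕ)) (f : _ → ℚ),
      A * (B * ∑ x ∈ s, f x) * (C * D) = ∑ x ∈ s, A * B * C * D * f x := by
    intro A B C D s f
    simp only [Finset.mul_sum, Finset.sum_mul]
    exact Finset.sum_congr rfl fun x _ => by ring
  simp only [hstep]
  rw [Finset.sum_sigma']
  refine Finset.sum_nbij'
    (fun ν => ⟨fun a => ∑ b : Fin (m+1), ν b.succ a.succ, fun a b => ν a.succ b.succ⟩)
    (fun p => fun a b => Fin.cases (motive := fun _ => ℕ)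
        (Fin.cases (motive := fun _ => ℕ) (k 0) (fun b' => k b'.succ - p.1 b') b)
        (fun a' => Fin.cases (motive := fun _ => ℕ) 0 (fun b' => p.2 a' b') b) a)
    ?_ ?_ ?_ ?_ ?_
  · -- forward membership
    intro ν hν
    obtain ⟨h00, ha0, hcb⟩ := triCol_facts hν
    rw [Finset.mem_sigma]
    dsimp only
    constructor
    · refine Fintype.mem_piFinset.2 fun a => ?_
      rw [Finset.mem_range, Nat.lt_succ_iff]
      have := hcb a; omega
    · refine mem_triCol.2 ⟨?_, ?_⟩
      · intro a b hba
        exact (mem_triCol.1 hν).1 a.succ b.succ (Fin.succ_lt_succ_iff.2 hba)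
      · intro b
        rfl
  · -- backward membership
    rintro ⟨i, ν'⟩ hp
    rw [Finset.mem_sigma] at hp
    dsimp only at hp
    have hiP : ∀ a : Fin (m+1), i a ≤ k a.succ := fun a => by
      have := Fintype.mem_piFinset.1 hp.1 a
      rw [Finset.mem_range] at this; omega
    obtain ⟨htri', hcol'⟩ := mem_triCol.1 hp.2
    refine mem_triCol.2 ⟨?_, ?_⟩
    · intro a b hba
      induction a using Fin.cases with
      | zero => exact absurd hba (Fin.not_lt_zero b)
      | succ a' =>
        induction b using Fin.cases with
        | zero => simp
        | succ b' =>
          simp only [Fin.cases_succ]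
          exact htri' a' b' (by rwa [← Fin.succ_lt_succ_iff])
    · intro b
      induction b using Fin.cases with
      | zero => simp [Fin.sum_univ_succ]
      | succ b' =>
        rw [Fin.sum_univ_succ]
        simp only [Fin.cases_zero, Fin.cases_succ]
        rw [hcol' b']
        exact Nat.sub_add_cancel (hiP b')
  · -- left inverse
    intro ν hν
    obtain ⟨h00, ha0, hcb⟩ := triCol_facts hν
    funext a b
    induction a using Fin.cases with
    | zero =>
      induction b using Fin.cases with
      | zero => simpa using h00.symm
      | succ b' =>
        simp only [Fin.cases_zero, Fin.cases_succ]
        have := hcb b'; omega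
    | succ a' =>
      induction b using Fin.cases with
      | zero => simpa using (ha0 a').symm
      | succ b' => simp
  · -- right inverse
    rintro ⟨i, ν'⟩ hp
    rw [Finset.mem_sigma] at hp
    obtain ⟨htri', hcol'⟩ := mem_triCol.1 hp.2
    refine Sigma.ext ?_ (heq_of_eq ?_)
    · funext a
      simpa using hcol' a
    · funext a b
      simp
  · -- term equality
    intro ν hν
    obtain ⟨h00, ha0, hcb⟩ := triCol_facts hν
    dsimp only
    have hile : ∀ a : Fin (m+1), (∑ b : Fin (m+1), ν b.succ a.succ) ≤ k a.succ := fun a => by have := hcb a; omega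
    have h0b : ∀ b : Fin (m+1), ν 0 b.succ = k b.succ - (∑ a : Fin (m+1), ν a.succ b.succ) := fun b => by have := hcb b; omega
    have hK : ∑ b : Fin (m+2), ν 0 b = k 0 + ∑ a : Fin (m+1), (k a.succ - (∑ b : Fin (m+1), ν b.succ a.succ)) := by
      rw [Fin.sum_univ_succ, h00]
      congr 1
      exact Finset.sum_congr rfl fun b _ => h0b b
    have hsign : ∑ a : Fin (m+2), k a =
        (∑ a : Fin (m+1), (∑ b : Fin (m+1), ν b.succ a.succ)) + (k 0 + ∑ a : Fin (m+1), (k a.succ - (∑ b : Fin (m+1), ν b.succ a.succ))) := by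
      have h2 : ∑ a : Fin (m+1), k a.succ =
          (∑ a : Fin (m+1), (∑ b : Fin (m+1), ν b.succ a.succ)) + ∑ a : Fin (m+1), (k a.succ - (∑ b : Fin (m+1), ν b.succ a.succ)) := by
        rw [← Finset.sum_add_distrib]
        exact Finset.sum_congr rfl fun a _ => by have := hile a; omega
      rw [Fin.sum_univ_succ, h2]; ring
    have hprod0 : ∏ b : Fin (m+2), ((ν 0 b).factorial : ℚ) =
        ((k 0).factorial : ℚ) * ∏ b : Fin (m+1), ((k b.succ - (∑ a : Fin (m+1), ν a.succ b.succ)).factorial : ℚ) := by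
      rw [Fin.prod_univ_succ, h00]
      congr 1
      exact Finset.prod_congr rfl fun b _ => by rw [h0b]
    have hprodsucc : ∀ a : Fin (m+1), ∏ b : Fin (m+2), ((ν a.succ b).factorial : ℚ) =
        ∏ b : Fin (m+1), ((ν a.succ b.succ).factorial : ℚ) := fun a => by
      rw [Fin.prod_univ_succ, ha0 a]; simp
    have hsumsucc : ∀ a : Fin (m+1), ∑ b : Fin (m+2), ν a.succ b =
        ∑ b : Fin (m+1), ν a.succ b.succ := fun a => by
      rw [Fin.sum_univ_succ, ha0 a]; simp
    rw [Fin.prod_univ_succ, hprod0, hK, hsign]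
    have hrows : ∏ a : Fin (m+1),
        (((k a.succ).factorial : ℚ) / ∏ b : Fin (m+2), ((ν a.succ b).factorial : ℚ)) *
          bernoulli ((∑ b : Fin (m+2), ν a.succ b) + 1) =
        (∏ a : Fin (m+1), ((k a.succ).choose ((∑ b : Fin (m+1), ν b.succ a.succ)) : ℚ)) *
          (∏ a : Fin (m+1), ((k a.succ - (∑ b : Fin (m+1), ν b.succ a.succ)).factorial : ℚ)) *
          ∏ a : Fin (m+1),
            ((((∑ b : Fin (m+1), ν b.succ a.succ)).factorial : ℚ) / ∏ b : Fin (m+1), ((ν a.succ b.succ).factorial : ℚ)) *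
              bernoulli ((∑ b : Fin (m+1), ν a.succ b.succ) + 1) := by
      rw [mul_assoc, ← Finset.prod_mul_distrib, ← Finset.prod_mul_distrib]
      refine Finset.prod_congr rfl fun a _ => ?_
      rw [hprodsucc a, hsumsucc a]
      have hfac : ((k a.succ).factorial : ℚ) =
          ((k a.succ).choose ((∑ b : Fin (m+1), ν b.succ a.succ)) : ℚ) * ((∑ b : Fin (m+1), ν b.succ a.succ)).factorial * (k a.succ - (∑ b : Fin (m+1), ν b.succ a.succ)).factorial := by
        exact_mod_cast congrArg (Nat.cast : ℕ → ℚ)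
          (Nat.choose_mul_factorial_mul_factorial (hile a)).symm
      rw [hfac]; ring
    rw [hrows, pow_add]
    have hP0 : (∏ b : Fin (m+1), ((k b.succ - (∑ a : Fin (m+1), ν a.succ b.succ)).factorial : ℚ)) ≠ 0 :=
      Finset.prod_ne_zero_iff.2 fun b _ => Nat.cast_ne_zero.2 (Nat.factorial_ne_zero _)
    have hk0 : ((k 0).factorial : ℚ) ≠ 0 := Nat.cast_ne_zero.2 (Nat.factorial_ne_zero _)
    field_simp
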